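/- Let M be a poset such that for all x, y ∈ M with x < y the interval [x,y]^{M^+} is a chain. Then for all a, b ∈ M^D with a < b, the sets [a,b) ∩ (M ∪ ↑Ram(M)) and (a,b] ∩ (M ∪ ↓Ram(M)) are nonempty, where [a,b) = {z ∈ M^D : a ≤ z < b}, (a,b] = {z ∈ M^D : a < z ≤ b}, and M is identified with the set of principal cuts in M^D. -/

import Mathlib

set_option autoImplicit false

section Preamble

/-- A *cut* of a poset `M`: a nonempty subset, bounded above, which equals the set of
lower bounds of its set of upper bounds. -/
def IsCut {M : Type*} [PartialOrder M] (J : Set M) : Prop :=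
  J.Nonempty ∧ (upperBounds J).Nonempty ∧ lowerBounds (upperBounds J) = J

/-- The Dedekind–MacNeille completion of `M`: the set of cuts, ordered by inclusion. -/
abbrev DMC (M : Type*) [PartialOrder M] : Type _ := {J : Set M // IsCut J}

/-- The canonical embedding of `M` into `DMC M`, `a ↦ {x | x ≤ a}`. -/
def principalCut {M : Type*} [PartialOrder M] (a : M) : DMC M :=
  ⟨Set.Iic a, ⟨a, le_refl a⟩, ⟨a, fun _ hx => hx⟩, by
    apply Set.Subset.antisymm
    · intro x hx
      exact hx (fun _ hy => hy)
    · exact subset_lowerBounds_upperBounds _⟩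

/-- The image of `M` in its Dedekind–MacNeille completion (the principal cuts). -/
def principalSet (M : Type*) [PartialOrder M] : Set (DMC M) :=
  Set.range (fun a : M => principalCut a)

/-- A 2-level poset: every element is minimal or maximal. -/
def IsTwoLevel (M : Type*) [PartialOrder M] : Prop :=
  ∀ x : M, IsMin x ∨ IsMax x

/-- The set `Min(M)` of minimal elements. -/
def minSet (M : Type*) [PartialOrder M] : Set M := {x | IsMin x}

/-- The set `Max(M)` of maximal elements. -/
def maxSet (M : Type*) [PartialOrder M] : Set M := {x | IsMax x}

/-- The comparability graph of a poset: `x` adjacent to `y` iff `x < y` or `y < x`. -/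
def compGraph (M : Type*) [PartialOrder M] : SimpleGraph M where
  Adj x y := x < y ∨ y < x
  symm := ⟨fun _ _ h => Or.symm h⟩
  loopless := ⟨fun x h => by rcases h with h | h <;> exact lt_irrefl x h⟩

/-- Upward ramification points of `M`: infima in `DMC M` of two incomparable elements of `M`. -/
def upRam (M : Type*) [PartialOrder M] : Set (DMC M) :=
  {p | ∃ a b : M, ¬ a ≤ b ∧ ¬ b ≤ a ∧ IsGLB {principalCut a, principalCut b} p}

/-- Downward ramification points of `M`: suprema in `DMC M` of two incomparable elements of `M`. -/
def downRam (M : Type*) [PartialOrder M] : Set (DMC M) :=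
  {p | ∃ a b : M, ¬ a ≤ b ∧ ¬ b ≤ a ∧ IsLUB {principalCut a, principalCut b} p}

/-- `M⁺ = M ∪ Ram(M)`, as a subset of `DMC M`. -/
def MPlus (M : Type*) [PartialOrder M] : Set (DMC M) :=
  principalSet M ∪ upRam M ∪ downRam M

/-- A 2-arc in a graph. -/
def IsTwoArc {V : Type*} (G : SimpleGraph V) (v₀ v₁ v₂ : V) : Prop :=
  G.Adj v₀ v₁ ∧ G.Adj v₁ v₂ ∧ v₀ ≠ v₂

/-- Local 1-arc-transitivity: every vertex stabilizer is transitive on neighbours. -/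
def LocallyOneArcTransitive {V : Type*} (G : SimpleGraph V) : Prop :=
  ∀ v u w : V, G.Adj v u → G.Adj v w → ∃ g : G ≃g G, g v = v ∧ g u = w

/-- Local 2-arc-transitivity: every vertex stabilizer is transitive on 2-arcs from that vertex. -/
def LocallyTwoArcTransitive {V : Type*} (G : SimpleGraph V) : Prop :=
  ∀ v u₁ w₁ u₂ w₂ : V, IsTwoArc G v u₁ w₁ → IsTwoArc G v u₂ w₂ →
    ∃ g : G ≃g G, g v = v ∧ g u₁ = u₂ ∧ g w₁ = w₂

/-- (Global) 1-arc-transitivity of a graph. -/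
def OneArcTransitive {V : Type*} (G : SimpleGraph V) : Prop :=
  ∀ v₀ v₁ u₀ u₁ : V, G.Adj v₀ v₁ → G.Adj u₀ u₁ →
    ∃ g : G ≃g G, g v₀ = u₀ ∧ g v₁ = u₁

/-- (Global) 2-arc-transitivity of a graph. -/
def TwoArcTransitive {V : Type*} (G : SimpleGraph V) : Prop :=
  ∀ v₀ v₁ v₂ u₀ u₁ u₂ : V, IsTwoArc G v₀ v₁ v₂ → IsTwoArc G u₀ u₁ u₂ →
    ∃ g : G ≃g G, g v₀ = u₀ ∧ g v₁ = u₁ ∧ g v₂ = u₂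

/-- 3-CS-homogeneity: every isomorphism between connected 3-element induced subposets
extends to an automorphism. -/
def ThreeCSHomogeneous (M : Type*) [PartialOrder M] : Prop :=
  ∀ A B : Set M, A.ncard = 3 → B.ncard = 3 →
    ((compGraph M).induce A).Connected → ((compGraph M).induce B).Connected →
    ∀ f : ↥A ≃o ↥B, ∃ g : M ≃o M, ∀ a : ↥A, g ↑a = ↑(f a)

/-- 2-CS-transitivity: the automorphism group is transitive on comparable pairs. -/
def TwoCSTransitive (M : Type*) [PartialOrder M] : Prop :=
  ∀ a b a' b' : M, a < b → a' < b' → ∃ g : M ≃o M, g a = a' ∧ g b = b'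

/-- 3-CS-transitivity: for any two isomorphic connected 3-element induced subposets there
is an automorphism carrying one onto the other. -/
def ThreeCSTransitive (M : Type*) [PartialOrder M] : Prop :=
  ∀ A B : Set M, A.ncard = 3 → B.ncard = 3 →
    ((compGraph M).induce A).Connected → ((compGraph M).induce B).Connected →
    Nonempty (↥A ≃o ↥B) → ∃ g : M ≃o M, ⇑g '' A = B

/-- A subset of a poset is a `k`-diamond if it consists of a least element, a greatest
element, and exactly `k` pairwise incomparable elements strictly in between. -/
def IsKDiamond {P : Type*} [PartialOrder P] (s : Set P) (k : ℕ) : Prop :=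
  ∃ a b : P, a ∈ s ∧ b ∈ s ∧ a ≠ b ∧ (∀ z ∈ s, a ≤ z ∧ z ≤ b) ∧
    (s \ {a, b}).ncard = k ∧
    ∀ z ∈ s \ ({a, b} : Set P), ∀ w ∈ s \ ({a, b} : Set P), z ≠ w → ¬ z ≤ w

end Preamble

section DensityAux

variable {M : Type*} [PartialOrder M]

private lemma mem_ub_pair {v t x : M} :
    x ∈ upperBounds ({v, t} : Set M) ↔ v ≤ x ∧ t ≤ x := by
  constructor
  · intro hx
    exact ⟨hx (Set.mem_insert _ _), hx (Set.mem_insert_of_mem _ rfl)⟩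
  · rintro ⟨h1, h2⟩ z hz
    simp only [Set.mem_insert_iff, Set.mem_singleton_iff] at hz
    rcases hz with rfl | rfl
    · exact h1
    · exact h2

private lemma mem_lb_pair {v t x : M} :
    x ∈ lowerBounds ({v, t} : Set M) ↔ x ≤ v ∧ x ≤ t := by
  constructor
  · intro hx
    exact ⟨hx (Set.mem_insert _ _), hx (Set.mem_insert_of_mem _ rfl)⟩
  · rintro ⟨h1, h2⟩ z hz
    simp only [Set.mem_insert_iff, Set.mem_singleton_iff] at hz
    rcases hz with rfl | rfl
    · exact h1
    · exact h2

private lemma cut_mem_of_le {J : Set M} (hJ : IsCut J) {x y : M} (hx : x ∈ J) (hyx : y ≤ x) :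
    y ∈ J := by
  rw [← hJ.2.2]
  intro u hu
  exact hyx.trans (hu hx)

private lemma principal_le_iff' {c : DMC M} {x : M} : principalCut x ≤ c ↔ x ∈ c.1 := by
  constructor
  · intro hle
    exact hle (le_refl x)
  · intro hx y hy
    exact cut_mem_of_le c.2 hx hy

private lemma isCut_lowerBounds {X : Set M} (hX : X.Nonempty)
    (hlb : (lowerBounds X).Nonempty) : IsCut (lowerBounds X) := by
  refine ⟨hlb, hX.mono fun x hx y hy => hy hx, ?_⟩
  apply Set.Subset.antisymm
  · exact lowerBounds_mono_set fun x hx y hy => hy hx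
  · exact subset_lowerBounds_upperBounds _

/-- The supremum in `DMC M` of two elements of `M` with a common upper bound. -/
private def supPair (y m : M) (hub : (upperBounds ({y, m} : Set M)).Nonempty) : DMC M :=
  ⟨lowerBounds (upperBounds ({y, m} : Set M)),
    isCut_lowerBounds hub ⟨y, fun t ht => ht (Set.mem_insert _ _)⟩⟩

private lemma left_le_supPair {y m : M} {hub : (upperBounds ({y, m} : Set M)).Nonempty} :
    principalCut y ≤ supPair y m hub :=
  principal_le_iff'.mpr fun t ht => ht (Set.mem_insert _ _)

private lemma right_le_supPair {y m : M} {hub : (upperBounds ({y, m} : Set M)).Nonempty} :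
    principalCut m ≤ supPair y m hub :=
  principal_le_iff'.mpr fun t ht => ht (Set.mem_insert_of_mem _ rfl)

private lemma supPair_isLUB (y m : M) (hub : (upperBounds ({y, m} : Set M)).Nonempty) :
    IsLUB {principalCut y, principalCut m} (supPair y m hub) := by
  constructor
  · intro c hc
    simp only [Set.mem_insert_iff, Set.mem_singleton_iff] at hc
    rcases hc with rfl | rfl
    · exact left_le_supPair
    · exact right_le_supPair
  · intro c hc
    have hyc : y ∈ c.1 := principal_le_iff'.mp (hc (Set.mem_insert _ _))
    have hmc : m ∈ c.1 := principal_le_iff'.mp (hc (Set.mem_insert_of_mem _ rfl))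
    intro e he
    rw [← c.2.2.2]
    intro t ht
    exact he (mem_ub_pair.mpr ⟨ht hyc, ht hmc⟩)

/-- The infimum in `DMC M` of two elements of `M` with a common lower bound. -/
private def infPair (v t : M) (hlb : (lowerBounds ({v, t} : Set M)).Nonempty) : DMC M :=
  ⟨lowerBounds ({v, t} : Set M), isCut_lowerBounds ⟨v, Set.mem_insert _ _⟩ hlb⟩

private lemma infPair_le_left {v t : M} {hlb : (lowerBounds ({v, t} : Set M)).Nonempty} :
    infPair v t hlb ≤ principalCut v :=
  fun _ he => (mem_lb_pair.mp he).1

private lemma infPair_le_right {v t : M} {hlb : (lowerBounds ({v, t} : Set M)).Nonempty} :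
    infPair v t hlb ≤ principalCut t :=
  fun _ he => (mem_lb_pair.mp he).2

private lemma infPair_isGLB (v t : M) (hlb : (lowerBounds ({v, t} : Set M)).Nonempty) :
    IsGLB {principalCut v, principalCut t} (infPair v t hlb) := by
  constructor
  · intro c hc
    simp only [Set.mem_insert_iff, Set.mem_singleton_iff] at hc
    rcases hc with rfl | rfl
    · exact infPair_le_left
    · exact infPair_le_right
  · intro c hc
    have hcv : c ≤ principalCut v := hc (Set.mem_insert _ _)
    have hct : c ≤ principalCut t := hc (Set.mem_insert_of_mem _ rfl)
    intro e he
    exact mem_lb_pair.mpr ⟨hcv he, hct he⟩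

end DensityAux

/-- density lemma. If all intervals `[x,y]^{M⁺}` (`x < y` in `M`) are
chains, then for any `a < b` in `M^D` both `[a,b) ∩ (M ∪ ↑Ram(M))` and
`(a,b] ∩ (M ∪ ↓Ram(M))` are nonempty. -/
theorem density_lemma (M : Type*) [PartialOrder M]
    (h : ∀ x y : M, x < y →
      IsChain (· ≤ ·) (MPlus M ∩ Set.Icc (principalCut x) (principalCut y))) :
    ∀ a b : DMC M, a < b →
      (Set.Ico a b ∩ (principalSet M ∪ upRam M)).Nonempty ∧
      (Set.Ioc a b ∩ (principalSet M ∪ downRam M)).Nonempty := by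
  intro a b hab
  constructor
  · -- Goal 1: `[a,b)` meets `M ∪ ↑Ram(M)`.
    obtain ⟨v, hva, hbv⟩ : ∃ v ∈ upperBounds a.1, ¬ b ≤ principalCut v := by
      by_contra hc
      push_neg at hc
      have hba : b ≤ a := by
        intro n hn
        rw [← a.2.2.2]
        intro v hv
        exact hc v hv hn
      exact absurd hba (not_le_of_gt hab)
    have hav : a ≤ principalCut v := fun n hn => hva hn
    by_cases hvb : principalCut v ≤ b
    · exact ⟨principalCut v, ⟨hav, lt_of_le_of_ne hvb fun he => hbv he.ge⟩, Or.inl ⟨v, rfl⟩⟩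
    · have hvnb : v ∉ b.1 := fun hh => hvb (principal_le_iff'.mpr hh)
      obtain ⟨t, htb, hvt⟩ : ∃ t ∈ upperBounds b.1, ¬ v ≤ t := by
        by_contra hc
        push_neg at hc
        refine hvnb ?_
        rw [← b.2.2.2]
        intro t ht
        exact hc t ht
      have htv : ¬ t ≤ v := fun hh => hbv fun n hn => (htb hn).trans hh
      obtain ⟨x, hx⟩ := a.2.1
      have hxv : x ≤ v := hva hx
      have hxb : x ∈ b.1 := hab.le hx
      have hxt : x ≤ t := htb hxb
      have hlbvt : (lowerBounds ({v, t} : Set M)).Nonempty := ⟨x, mem_lb_pair.mpr ⟨hxv, hxt⟩⟩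
      set q : DMC M := infPair v t hlbvt with hqdef
      have hqur : q ∈ upRam M := ⟨v, t, hvt, htv, infPair_isGLB v t hlbvt⟩
      have haq : a ≤ q := fun n hn => mem_lb_pair.mpr ⟨hva hn, htb (hab.le hn)⟩
      have hq_le_pv : q ≤ principalCut v := infPair_le_left
      have hq_le_pt : q ≤ principalCut t := infPair_le_right
      have hxltt : x < t := by
        refine lt_of_le_of_ne hxt fun he => ?_
        have hba : b ≤ a := fun n hn => cut_mem_of_le a.2 hx ((htb hn).trans he.ge)
        exact absurd hba (not_le_of_gt hab)
      have hchain := h x t hxltt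
      have h2 : q ∈ MPlus M ∩ Set.Icc (principalCut x) (principalCut t) :=
        ⟨Or.inl (Or.inr hqur),
          principal_le_iff'.mpr (mem_lb_pair.mpr ⟨hxv, hxt⟩), hq_le_pt⟩
      have hqb : q ≤ b := by
        intro e he
        rw [← b.2.2.2]
        intro t' ht'
        by_contra het'
        have hev : e ≤ v := (mem_lb_pair.mp he).1
        have het : e ≤ t := (mem_lb_pair.mp he).2
        have hnt'v : ¬ t' ≤ v := fun hh => hbv fun n hn => (ht' hn).trans hh
        have hxt' : x ≤ t' := ht' hxb
        by_cases htt' : t ≤ t'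
        · exact het' (het.trans htt')
        · by_cases ht't : t' ≤ t
          · have h1 : principalCut t' ∈ MPlus M ∩ Set.Icc (principalCut x) (principalCut t) :=
              ⟨Or.inl (Or.inl ⟨t', rfl⟩), fun z hz => hz.trans hxt', fun z hz => hz.trans ht't⟩
            rcases eq_or_ne (principalCut t') q with heq | hne
            · exact het' (heq.ge he)
            · rcases hchain h1 h2 hne with hle | hle
              · exact hnt'v (hq_le_pv (hle (le_refl t')))
              · exact het' (hle he)
          · have hlbtt' : (lowerBounds ({t, t'} : Set M)).Nonempty :=
              ⟨x, mem_lb_pair.mpr ⟨hxt, hxt'⟩⟩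
            set r : DMC M := infPair t t' hlbtt' with hrdef
            have hrur : r ∈ upRam M := ⟨t, t', htt', ht't, infPair_isGLB t t' hlbtt'⟩
            have hbr : b ≤ r := fun n hn => mem_lb_pair.mpr ⟨htb hn, ht' hn⟩
            have h1 : r ∈ MPlus M ∩ Set.Icc (principalCut x) (principalCut t) :=
              ⟨Or.inl (Or.inr hrur),
                principal_le_iff'.mpr (mem_lb_pair.mpr ⟨hxt, hxt'⟩), infPair_le_left⟩
            rcases eq_or_ne r q with heq | hne
            · exact hbv ((heq ▸ hbr).trans hq_le_pv)
            · rcases hchain h1 h2 hne with hle | hle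
              · exact hbv ((hbr.trans hle).trans hq_le_pv)
              · exact het' (hle.trans (infPair_le_right (hlb := hlbtt')) he)
      have hqltb : q < b := lt_of_le_of_ne hqb fun heq => hbv (heq ▸ hq_le_pv)
      exact ⟨q, ⟨haq, hqltb⟩, Or.inr hqur⟩
  · -- Goal 2: `(a,b]` meets `M ∪ ↓Ram(M)`.
    obtain ⟨m, hmb, hma⟩ : ∃ m, m ∈ b.1 ∧ m ∉ a.1 := by
      obtain ⟨m, hm1, hm2⟩ := Set.exists_of_ssubset
        (show a.1 ⊂ b.1 from ⟨hab.le, fun hh => hab.ne (Subtype.ext (le_antisymm hab.le hh))⟩)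
      exact ⟨m, hm1, hm2⟩
    have hpmb : principalCut m ≤ b := principal_le_iff'.mpr hmb
    by_cases hapm : a ≤ principalCut m
    · refine ⟨principalCut m, ⟨lt_of_le_of_ne hapm fun he => ?_, hpmb⟩, Or.inl ⟨m, rfl⟩⟩
      exact hma (by rw [he]; exact le_refl m)
    · obtain ⟨y, hya, hym⟩ : ∃ y ∈ a.1, ¬ y ≤ m := by
        by_contra hc
        push_neg at hc
        exact hapm fun z hz => hc z hz
      obtain ⟨u, hu⟩ := b.2.2.1
      have hyb : y ∈ b.1 := hab.le hya
      have hyu : y ≤ u := hu hyb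
      have hmu : m ≤ u := hu hmb
      have hmy : ¬ m ≤ y := fun hh => hma (cut_mem_of_le a.2 hya hh)
      have hubym : (upperBounds ({y, m} : Set M)).Nonempty := ⟨u, mem_ub_pair.mpr ⟨hyu, hmu⟩⟩
      set s : DMC M := supPair y m hubym with hsdef
      have hys : principalCut y ≤ s := left_le_supPair
      have hms : principalCut m ≤ s := right_le_supPair
      have hslub : IsLUB {principalCut y, principalCut m} s := supPair_isLUB y m hubym
      have hsdr : s ∈ downRam M := ⟨y, m, hym, hmy, hslub⟩
      have hsb : s ≤ b := by
        refine hslub.2 ?_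
        intro c hc
        simp only [Set.mem_insert_iff, Set.mem_singleton_iff] at hc
        rcases hc with rfl | rfl
        · exact principal_le_iff'.mpr hyb
        · exact hpmb
      have hs_le_pu : s ≤ principalCut u := fun e he => he (mem_ub_pair.mpr ⟨hyu, hmu⟩)
      have hyltu : y < u := by
        refine lt_of_le_of_ne hyu fun he => ?_
        have hba : b ≤ a := fun n hn => cut_mem_of_le a.2 hya ((hu hn).trans he.ge)
        exact absurd hba (not_le_of_gt hab)
      have hchain := h y u hyltu
      have h2 : s ∈ MPlus M ∩ Set.Icc (principalCut y) (principalCut u) :=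
        ⟨Or.inr hsdr, hys, hs_le_pu⟩
      have has : a ≤ s := by
        intro y' hy'
        intro v hv
        by_contra hy'v
        have hyv : y ≤ v := (mem_ub_pair.mp hv).1
        have hmv : m ≤ v := (mem_ub_pair.mp hv).2
        have hmy' : ¬ m ≤ y' := fun hh => hma (cut_mem_of_le a.2 hy' hh)
        have hy'y : ¬ y' ≤ y := fun hh => hy'v (hh.trans hyv)
        have hy'b : y' ∈ b.1 := hab.le hy'
        have hy'u : y' ≤ u := hu hy'b
        by_cases hyy' : y ≤ y'
        · have h1 : principalCut y' ∈ MPlus M ∩ Set.Icc (principalCut y) (principalCut u) :=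
            ⟨Or.inl (Or.inl ⟨y', rfl⟩), fun z hz => hz.trans hyy', fun z hz => hz.trans hy'u⟩
          rcases eq_or_ne (principalCut y') s with he | hne
          · exact hmy' (hms.trans he.ge (le_refl m))
          · rcases hchain h1 h2 hne with hle | hle
            · exact hy'v (principal_le_iff'.mp hle hv)
            · exact hmy' (hms.trans hle (le_refl m))
        · have hubyy' : (upperBounds ({y, y'} : Set M)).Nonempty :=
            ⟨u, mem_ub_pair.mpr ⟨hyu, hy'u⟩⟩
          set r : DMC M := supPair y y' hubyy' with hrdef
          have hrdr : r ∈ downRam M := ⟨y, y', hyy', hy'y, supPair_isLUB y y' hubyy'⟩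
          have hra : r ≤ a := by
            intro e he
            rw [← a.2.2.2]
            intro t ht
            exact he (mem_ub_pair.mpr ⟨ht hya, ht hy'⟩)
          have hr_le_pu : r ≤ principalCut u := fun e he => he (mem_ub_pair.mpr ⟨hyu, hy'u⟩)
          have h1 : r ∈ MPlus M ∩ Set.Icc (principalCut y) (principalCut u) :=
            ⟨Or.inr hrdr, left_le_supPair, hr_le_pu⟩
          rcases eq_or_ne r s with he | hne
          · exact hma (hra (show m ∈ r.1 by rw [he]; exact principal_le_iff'.mp hms))
          · rcases hchain h1 h2 hne with hle | hle
            · exact hy'v (hle (principal_le_iff'.mp (right_le_supPair (hub := hubyy'))) hv)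
            · exact hma (hra (hle (principal_le_iff'.mp hms)))
      have hlt : a < s := lt_of_le_of_ne has fun he =>
        hma (show m ∈ a.1 by rw [he]; exact principal_le_iff'.mp hms)
      exact ⟨s, ⟨hlt, hsb⟩, Or.inr hsdr⟩
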